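/- Fix a, b > 0 with a > b, 0 < x₀ < x₁ < 1, γ > 0, and a strictly convex function Φ : ℝ → ℝ of class C² with Φ'' continuous and strictly positive, such that ∫₁^∞ dv/(Φ''(v) v⁴) = ∞. Let 0 < T < ∞ and let D₁, D₂ : [0,T] → ℝ be continuous, differentiable on [0,T), with D₁(0), D₂(0) ≥ γ, strictly positive on [0,T), satisfying D₁'(t) = a² Φ''(u₀(t))/D₁(t)² and D₂'(t) = (a−b)(a Φ''(u₀(t)) − b Φ''(u₁(t)))/D₂(t)², where u₀(t) = a(x₁−x₀)/D₁(t) + (a−b)(1−x₁)/D₂(t) and u₁(t) = (a−b)(1−x₁)/D₂(t). Then D₂(T) > 0. -/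
import Mathlib

open MeasureTheory Set Filter
open scoped Topology

/-- For the δ-source gradient-flow ODE system with `a > b` and a
strictly convex entropy with `Φ'' > 0` such that `∫₁^∞ dv/(Φ''(v) v⁴) = ∞`
(the positive integrand is not integrable on `[1,∞)`), one has `D₂(T) > 0`. -/
theorem stmt_16
    (a b : ℝ) (ha : 0 < a) (hb : 0 < b) (hab : b < a)
    (x₀ x₁ : ℝ) (hx₀ : 0 < x₀) (hx01 : x₀ < x₁) (hx₁ : x₁ < 1)
    (γ : ℝ) (hγ : 0 < γ)
    (Φ : ℝ → ℝ) (hΦ : ContDiff ℝ 2 Φ) (hconv : StrictConvexOn ℝ univ Φ)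
    (hΦ''pos : ∀ v : ℝ, 0 < iteratedDeriv 2 Φ v)
    (hdiv : ¬ IntegrableOn (fun v => 1 / (iteratedDeriv 2 Φ v * v ^ 4)) (Ici 1) volume)
    (T : ℝ) (hT : 0 < T)
    (D₁ D₂ : ℝ → ℝ)
    (hD₁c : ContinuousOn D₁ (Icc 0 T)) (hD₂c : ContinuousOn D₂ (Icc 0 T))
    (hD₁pos : ∀ t ∈ Ico (0:ℝ) T, 0 < D₁ t) (hD₂pos : ∀ t ∈ Ico (0:ℝ) T, 0 < D₂ t)
    (hD₁0 : γ ≤ D₁ 0) (hD₂0 : γ ≤ D₂ 0)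
    (u₀ u₁ : ℝ → ℝ)
    (hu₀ : ∀ t, u₀ t = a * (x₁ - x₀) / D₁ t + (a - b) * (1 - x₁) / D₂ t)
    (hu₁ : ∀ t, u₁ t = (a - b) * (1 - x₁) / D₂ t)
    (hODE₁ : ∀ t ∈ Ico (0:ℝ) T,
      HasDerivWithinAt D₁ (a ^ 2 * iteratedDeriv 2 Φ (u₀ t) / (D₁ t) ^ 2) (Icc 0 T) t)
    (hODE₂ : ∀ t ∈ Ico (0:ℝ) T,
      HasDerivWithinAt D₂
        ((a - b) * (a * iteratedDeriv 2 Φ (u₀ t) - b * iteratedDeriv 2 Φ (u₁ t)) / (D₂ t) ^ 2)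
        (Icc 0 T) t) :
    0 < D₂ T := by
  set g : ℝ → ℝ := fun v => 1 / (iteratedDeriv 2 Φ v * v ^ 4) with hg
  set c : ℝ := (a - b) * (1 - x₁) with hc
  have hcpos : 0 < c := mul_pos (by linarith) (by linarith)
  set K : ℝ := (a - b) * b / c ^ 3 with hK
  have hKpos : 0 < K := div_pos (mul_pos (by linarith) hb) (by positivity)
  set G : ℝ → ℝ := fun w => ∫ v in (1:ℝ)..w, g v with hG
  have hΦ''cont : Continuous (iteratedDeriv 2 Φ) := hΦ.continuous_iteratedDeriv 2 le_rfl
  have hgm : Measurable g := by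
    exact measurable_const.div ((hΦ''cont.measurable).mul ((measurable_id.pow_const 4)))
  have hgnn : ∀ v, 0 ≤ g v := fun v =>
    div_nonneg one_pos.le (mul_nonneg (hΦ''pos v).le (by positivity))
  have hgc : ∀ v : ℝ, v ≠ 0 → ContinuousAt g v := by
    intro v hv
    exact continuousAt_const.div
      ((hΦ''cont.continuousAt).mul ((continuous_pow 4).continuousAt))
      (mul_ne_zero (hΦ''pos v).ne' (pow_ne_zero _ hv))
  have hInt : ∀ w w' : ℝ, 0 < w → 0 < w' → IntervalIntegrable g volume w w' := by
    intro w w' hw hw'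
    apply ContinuousOn.intervalIntegrable
    intro v hv
    have h1 : min w w' ≤ v := hv.1
    have h2 : 0 < min w w' := lt_min hw hw'
    exact (hgc v (by intro h; rw [h] at h1; linarith)).continuousWithinAt
  have hGmono : ∀ w w' : ℝ, 0 < w → w ≤ w' → G w ≤ G w' := by
    intro w w' hw hww'
    have hw' : 0 < w' := lt_of_lt_of_le hw hww'
    have hadd := intervalIntegral.integral_add_adjacent_intervals
      (hInt 1 w one_pos hw) (hInt w w' hw hw')
    have hnn : 0 ≤ ∫ v in w..w', g v :=
      intervalIntegral.integral_nonneg hww' fun u _ => hgnn u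
    simp only [hG]
    rw [← hadd]
    linarith
  -- unboundedness of G from non-integrability
  have hunb : ∀ M : ℝ, ∃ w : ℝ, 1 ≤ w ∧ M < G w := by
    intro M
    by_contra h
    push_neg at h
    apply hdiv
    rw [integrableOn_Ici_iff_integrableOn_Ioi]
    refine integrableOn_Ioi_of_intervalIntegral_norm_bounded M 1
      (fun i : ℝ => ?_) (tendsto_id (α := ℝ)) ?_
    · by_cases hi : 0 < i
      · exact ((hInt 1 i one_pos hi).1)
      · rw [show Ioc (1:ℝ) (id i) = ∅ by
            apply Ioc_eq_empty; simp only [id_eq]; push_neg at hi ⊢; linarith]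
        exact integrableOn_empty
    · filter_upwards [eventually_ge_atTop (1:ℝ)] with i hi
      have : (∫ x in (1:ℝ)..id i, ‖g x‖) = G i := by
        apply intervalIntegral.integral_congr
        intro x _
        exact Real.norm_of_nonneg (hgnn x)
      rw [this]
      exact h i hi
  -- u₁ as c / D₂
  have hu₁' : u₁ = fun t => c / D₂ t := funext fun t => by rw [hu₁ t]
  have hu₁pos : ∀ t ∈ Ico (0:ℝ) T, 0 < u₁ t := by
    intro t ht
    rw [hu₁']
    exact div_pos hcpos (hD₂pos t ht)
  -- the derivative expression
  set d2 : ℝ → ℝ := fun t =>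
    (a - b) * (a * iteratedDeriv 2 Φ (u₀ t) - b * iteratedDeriv 2 Φ (u₁ t)) / (D₂ t) ^ 2
    with hd2
  set F : ℝ → ℝ := fun t =>
    K * 1 - g (u₁ t) * ((0 * D₂ t - c * d2 t) / D₂ t ^ 2) with hF
  have key : ∀ t ∈ Ico (0:ℝ) T,
      HasDerivWithinAt (fun τ => K * τ - G (u₁ τ)) (F t) (Icc 0 T) t := by
    intro t ht
    have hD2t : 0 < D₂ t := hD₂pos t ht
    have hu₁t : 0 < u₁ t := hu₁pos t ht
    have hderivu₁ : HasDerivWithinAt u₁ ((0 * D₂ t - c * d2 t) / D₂ t ^ 2) (Icc 0 T) t := by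
      rw [hu₁']
      exact (hasDerivWithinAt_const t _ c).div (hODE₂ t ht) hD2t.ne'
    have hGd : HasDerivAt G (g (u₁ t)) (u₁ t) :=
      intervalIntegral.integral_hasDerivAt_right (hInt 1 (u₁ t) one_pos hu₁t)
        (hgm.stronglyMeasurable.stronglyMeasurableAtFilter)
        (hgc (u₁ t) hu₁t.ne')
    have hcomp := hGd.comp_hasDerivWithinAt t hderivu₁
    exact ((hasDerivWithinAt_id t (Icc 0 T)).const_mul K).sub hcomp
  have hFnn : ∀ t ∈ Ico (0:ℝ) T, 0 ≤ F t := by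
    intro t ht
    have hD2t : 0 < D₂ t := hD₂pos t ht
    have hA : 0 < iteratedDeriv 2 Φ (u₀ t) := hΦ''pos _
    have hB : 0 < iteratedDeriv 2 Φ (u₁ t) := hΦ''pos _
    simp only [hF, hd2, hg, hK]
    rw [hu₁ t] at hB ⊢
    set A := iteratedDeriv 2 Φ (u₀ t)
    set B := iteratedDeriv 2 Φ ((a - b) * (1 - x₁) / D₂ t)
    rw [← hc] at *
    rw [div_pow, sub_nonneg]
    have hBne : B ≠ 0 := hB.ne'
    have hcne : c ≠ 0 := hcpos.ne'
    have hdne : D₂ t ≠ 0 := hD2t.ne'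
    have key2 : (1 / (B * (c ^ 4 / D₂ t ^ 4))) *
        ((0 * D₂ t - c * ((a - b) * (a * A - b * B) / D₂ t ^ 2)) / D₂ t ^ 2)
        = (a - b) * (b * B - a * A) / (B * c ^ 3) := by
      field_simp
      ring
    rw [key2, mul_one, div_le_div_iff₀ (by positivity) (by positivity)]
    nlinarith [mul_nonneg (mul_nonneg (mul_nonneg (sub_pos.mpr hab).le ha.le) hA.le)
      (mul_nonneg hB.le (pow_pos hcpos 3).le)]
  -- Gronwall-type bound
  have main : ∀ s ∈ Ico (0:ℝ) T, G (u₁ s) ≤ G (u₁ 0) + K * s := by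
    intro s hs
    have hsub : Icc (0:ℝ) s ⊆ Ico 0 T := fun x hx => ⟨hx.1, lt_of_le_of_lt hx.2 hs.2⟩
    have hsub' : Icc (0:ℝ) s ⊆ Icc 0 T := fun x hx => ⟨hx.1, le_of_lt (lt_of_le_of_lt hx.2 hs.2)⟩
    have hmono : MonotoneOn (fun τ => K * τ - G (u₁ τ)) (Icc 0 s) := by
      apply monotoneOn_of_hasDerivWithinAt_nonneg (convex_Icc 0 s)
        (f' := F)
      · intro x hx
        exact ((key x (hsub hx)).continuousWithinAt).mono hsub'
      · intro x hx
        rw [interior_Icc] at hx ⊢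
        exact (key x (hsub ⟨hx.1.le, hx.2.le⟩)).mono
          (fun y hy => hsub' ⟨hy.1.le, hy.2.le⟩)
      · intro x hx
        rw [interior_Icc] at hx
        exact hFnn x (hsub ⟨hx.1.le, hx.2.le⟩)
    have := hmono (left_mem_Icc.2 hs.1) (right_mem_Icc.2 hs.1) hs.1
    simp only at this
    linarith
  -- get the a priori bound on u₁ and conclude
  obtain ⟨w, hw1, hwM⟩ := hunb (G (u₁ 0) + K * T)
  have hwpos : 0 < w := lt_of_lt_of_le one_pos hw1
  have hub : ∀ t ∈ Ico (0:ℝ) T, u₁ t < w := by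
    intro t ht
    by_contra h
    push_neg at h
    have h1 : G w ≤ G (u₁ t) := hGmono w (u₁ t) hwpos h
    have h2 : G (u₁ t) ≤ G (u₁ 0) + K * t := main t ht
    have h3 : K * t ≤ K * T := by nlinarith [ht.2, hKpos]
    linarith
  have hDlb : ∀ t ∈ Ico (0:ℝ) T, c / w ≤ D₂ t := by
    intro t ht
    have h1 : u₁ t < w := hub t ht
    have hD2t : 0 < D₂ t := hD₂pos t ht
    rw [hu₁'] at h1
    rw [div_le_iff₀ hwpos]
    rw [div_lt_iff₀ hD2t] at h1
    nlinarith
  have hne : (𝓝[Ico (0:ℝ) T] T).NeBot := by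
    rw [← mem_closure_iff_nhdsWithin_neBot, closure_Ico hT.ne]
    exact ⟨hT.le, le_rfl⟩
  have hlim : Tendsto D₂ (𝓝[Ico (0:ℝ) T] T) (𝓝 (D₂ T)) :=
    ((hD₂c T ⟨hT.le, le_rfl⟩).mono Ico_subset_Icc_self)
  have : c / w ≤ D₂ T :=
    ge_of_tendsto hlim (eventually_mem_nhdsWithin.mono fun t ht => hDlb t ht)
  have : 0 < c / w := div_pos hcpos hwpos
  linarith
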